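/- arXiv:1511.05882 — 2 statements merged into one kernel-verified Lean document; each statement's English description precedes it below -/
import Mathlib

section
/- Let ξ be an ordinal, λ an additively indecomposable limit ordinal, and f an ordinal-valued function on [0, λ) such that 0 < f(η) < e^λ(ξ+1) for all η < λ. Then lim_{η→λ} e^η(e^λ(ξ) + f(η)) = e^λ(ξ+1): for every ζ < e^λ(ξ+1) there is δ < λ such that e^η(e^λ(ξ) + f(η)) ∈ (ζ, e^λ(ξ+1)] for all η with δ < η < λ. -/
open Ordinal Set

noncomputable section

universe u

/-! ## Basic topological notions (explicit topologies) -/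

/-- The derived set (set of limit points) of `A` w.r.t. the topology `t`. -/
def dSet {X : Type u} (t : TopologicalSpace X) (A : Set X) : Set X :=
  {x | ∀ U : Set X, t.IsOpen U → x ∈ U → ∃ y, y ∈ U ∩ A ∧ y ≠ x}

/-- Transfinite iterates of the derived-set operator, starting from the whole space. -/
def dIter {X : Type u} (t : TopologicalSpace X) (o : Ordinal.{u}) : Set X :=
  Ordinal.limitRecOn o Set.univ (fun _ ih => dSet t ih)
    (fun o _ ih => ⋂ (o' : Ordinal.{u}) (h : o' < o), ih o' h)

/-- The Cantor–Bendixson rank of a point: the least `ξ` with `x ∉ d^{ξ+1} X`. -/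
def ptRank {X : Type u} (t : TopologicalSpace X) (x : X) : Ordinal.{u} :=
  sInf {ξ : Ordinal.{u} | x ∉ dIter t (ξ + 1)}

/-- The rank of a space: `sup_{x ∈ X} (ρ(x) + 1)`. -/
def spRank (X : Type u) (t : TopologicalSpace X) : Ordinal.{u} :=
  ⨆ x : X, ptRank t x + 1

/-- A space is scattered if every nonempty subset has an isolated point. -/
def IsScattered {X : Type u} (t : TopologicalSpace X) : Prop :=
  ∀ A : Set X, A.Nonempty → ∃ x ∈ A, ∃ U : Set X, t.IsOpen U ∧ U ∩ A = {x}

/-- A `d`-map: continuous, open and pointwise discrete. -/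
def IsDMap {X : Type u} {Y : Type*} (t : TopologicalSpace X) (s : TopologicalSpace Y)
    (f : X → Y) : Prop :=
  @Continuous _ _ t s f ∧ @IsOpenMap _ _ t s f ∧
    ∀ y : Y, ∀ x : X, f x = y →
      ∃ U : Set X, t.IsOpen U ∧ x ∈ U ∧ ∀ z ∈ U, f z = y → z = x

/-! ## Hyperexponentials and hyperlogarithms -/

/-- The exponential `e ξ = -1 + ω^ξ`. -/
def eFun (x : Ordinal.{u}) : Ordinal.{u} := ω ^ x - 1

/-- `E` is the family of hyperexponentials: a family of normal functions with `E 1 = e`,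
`E (α+β) = E α ∘ E β`, pointwise minimal among all such families. -/
def IsHyperexpFamily (E : Ordinal.{u} → Ordinal.{u} → Ordinal.{u}) : Prop :=
  (∀ a, Order.IsNormal (E a)) ∧ E 1 = eFun ∧ (∀ a b, E (a + b) = E a ∘ E b) ∧
    ∀ F : Ordinal.{u} → Ordinal.{u} → Ordinal.{u},
      (∀ a, Order.IsNormal (F a)) → F 1 = eFun → (∀ a b, F (a + b) = F a ∘ F b) →
        ∀ a b, E a b ≤ F a b

/-- The end logarithm: `ℓ 0 = 0` and `ℓ ξ` is the unique `β` with `ξ = α + ω^β`. -/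
def ellFun (x : Ordinal.{u}) : Ordinal.{u} :=
  if x = 0 then 0 else sInf {b : Ordinal.{u} | ∃ a, x = a + ω ^ b}

/-- An initial function maps initial segments onto initial segments. -/
def IsInitialFun (f : Ordinal.{u} → Ordinal.{u}) : Prop :=
  ∀ o : Ordinal.{u}, ∃ o' : Ordinal.{u}, f '' Set.Iio o = Set.Iio o'

/-- `L` is the family of hyperlogarithms: a family of initial functions with `L 1 = ℓ`,
`L (α+β) = L β ∘ L α`, pointwise maximal among all such families. -/
def IsHyperlogFamily (L : Ordinal.{u} → Ordinal.{u} → Ordinal.{u}) : Prop :=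
  (∀ a, IsInitialFun (L a)) ∧ L 1 = ellFun ∧ (∀ a b, L (a + b) = L b ∘ L a) ∧
    ∀ M : Ordinal.{u} → Ordinal.{u} → Ordinal.{u},
      (∀ a, IsInitialFun (M a)) → M 1 = ellFun → (∀ a b, M (a + b) = M b ∘ M a) →
        ∀ a b, M a b ≤ L a b

/-! ## Icard topologies -/

/-- The generalized Icard topology `τ_λ` based on a space `(X, t)`, relative to a family `L`
of hyperlogarithms: the least topology containing `t` and all sets
`(α, β]_ξ = {x | α < ℓ^ξ ρ_t(x) ≤ β}` (including `α = -1`, i.e. `[0, β]_ξ`), for `ξ < λ`. -/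
def IcardTop {X : Type u} (L : Ordinal.{u} → Ordinal.{u} → Ordinal.{u})
    (t : TopologicalSpace X) (lam : Ordinal.{u}) : TopologicalSpace X :=
  t ⊓ TopologicalSpace.generateFrom
    {S : Set X | ∃ ξ < lam,
      (∃ b : Ordinal.{u}, S = {x | L ξ (ptRank t x) ≤ b}) ∨
      (∃ a b : Ordinal.{u}, a < b ∧ S = {x | a < L ξ (ptRank t x) ∧ L ξ (ptRank t x) ≤ b})}

/-! ## Ordinal spaces -/

/-- The ordinal corresponding to a point of `Θ.ToType`. -/
def ordVal {Θ : Ordinal.{u}} (x : Θ.ToType) : Ordinal.{u} :=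
  @Ordinal.typein Θ.ToType (· < ·) isWellOrder_lt x

/-- The left topology `I₀` on (the canonical type of order type) `Θ`, generated by the
intervals `[0, β]`. -/
def leftTop (Θ : Ordinal.{u}) : TopologicalSpace Θ.ToType :=
  TopologicalSpace.generateFrom {S : Set Θ.ToType | ∃ b : Θ.ToType, S = Set.Iic b}

/-- The interval topology `I₁` on `Θ`, generated by the sets `[0, β]` and `(α, β]`. -/
def intervalTop (Θ : Ordinal.{u}) : TopologicalSpace Θ.ToType :=
  TopologicalSpace.generateFrom
    {S : Set Θ.ToType | (∃ b, S = Set.Iic b) ∨ ∃ a b : Θ.ToType, S = Set.Ioc a b}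

/-- The Icard topology `I_λ = (I₀)_λ` on the ordinal `Θ`: the least topology containing the
left topology and all sets `{x < Θ | α < ℓ^ξ x ≤ β}` for `ξ < λ`. -/
def ordIcard (L : Ordinal.{u} → Ordinal.{u} → Ordinal.{u}) (Θ lam : Ordinal.{u}) :
    TopologicalSpace Θ.ToType :=
  leftTop Θ ⊓ TopologicalSpace.generateFrom
    {S : Set Θ.ToType | ∃ ξ < lam,
      (∃ b : Ordinal.{u}, S = {x | L ξ (ordVal x) ≤ b}) ∨
      (∃ a b : Ordinal.{u}, a < b ∧ S = {x | a < L ξ (ordVal x) ∧ L ξ (ordVal x) ≤ b})}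

/-! ## Modal logic: GL and topological (d-)semantics -/

/-- Formulas of the basic modal language. -/
inductive Fml : Type
  | bot : Fml
  | var : ℕ → Fml
  | imp : Fml → Fml → Fml
  | box : Fml → Fml

namespace Fml

/-- Negation. -/
def neg (p : Fml) : Fml := p.imp .bot

/-- Diamond. -/
def dia (p : Fml) : Fml := (p.neg.box).neg

end Fml

/-- The valuation determined by an assignment `V` of sets to propositional variables, in the
`d`-semantics: `⟦◇φ⟧ = d⟦φ⟧`, i.e. `⟦◻φ⟧` is the complement of the derived set of the
complement of `⟦φ⟧`. -/
def fval {X : Type u} (t : TopologicalSpace X) (V : ℕ → Set X) : Fml → Set X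
  | .bot => ∅
  | .var n => V n
  | .imp p q => (fval t V p)ᶜ ∪ fval t V q
  | .box p => (dSet t (fval t V p)ᶜ)ᶜ

/-- Classical tautologies (boxed formulas and variables treated as atoms). -/
def Tautology (φ : Fml) : Prop :=
  ∀ v : Fml → Bool, v .bot = false → (∀ p q : Fml, v (p.imp q) = (!(v p) || v q)) →
    v φ = true

/-- Provability in the Gödel–Löb provability logic `GL`. -/
inductive GLProv : Fml → Prop
  | taut {φ : Fml} : Tautology φ → GLProv φ
  | axK (p q : Fml) : GLProv (((p.imp q).box).imp ((p.box).imp q.box))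
  | axLob (p : Fml) : GLProv ((((p.box).imp p).box).imp p.box)
  | mp {p q : Fml} : GLProv (p.imp q) → GLProv p → GLProv q
  | nec {p : Fml} : GLProv p → GLProv p.box

/-- A set of formulas is GL-consistent if no finite conjunction of its members provably
implies `⊥`. -/
def GLConsistent (Γ : Set Fml) : Prop :=
  ¬ ∃ l : List Fml, (∀ φ ∈ l, φ ∈ Γ) ∧ GLProv (l.foldr .imp .bot)

/-- `Γ` is satisfied in the space `(X, t)`. -/
def SatisfiedIn {X : Type u} (t : TopologicalSpace X) (Γ : Set Fml) : Prop :=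
  ∃ (V : ℕ → Set X) (x : X), ∀ φ ∈ Γ, x ∈ fval t V φ

/-- `GL` is strongly complete with respect to `(X, t)`. -/
def StronglyCompleteFor {X : Type u} (t : TopologicalSpace X) : Prop :=
  ∀ Γ : Set Fml, GLConsistent Γ → SatisfiedIn t Γ

/-- Validity of a formula in a space under the `d`-semantics. -/
def ValidIn {X : Type u} (t : TopologicalSpace X) (φ : Fml) : Prop :=
  ∀ V : ℕ → Set X, fval t V φ = Set.univ

/-! ## Trees and ω-bouquets -/

/-- The upset topology of a relation: opens are the `R`-upward closed sets. -/
def upTop {T : Type u} (R : T → T → Prop) : TopologicalSpace T where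
  IsOpen U := ∀ x ∈ U, ∀ y, R x y → y ∈ U
  isOpen_univ := fun x _ y _ => trivial
  isOpen_inter := fun s t hs ht x hx y hR => ⟨hs x hx.1 y hR, ht x hx.2 y hR⟩
  isOpen_sUnion := fun S hS x hx y hR => by
    obtain ⟨s, hsS, hxs⟩ := hx
    exact ⟨s, hsS, hS s hsS x hxs y hR⟩

/-- A countable, converse well-founded tree. -/
structure IsOmegaTree {T : Type u} (R : T → T → Prop) : Prop where
  countable : Countable T
  trans : ∀ a b c, R a b → R b c → R a c
  irrefl : ∀ a, ¬ R a a
  predWellOrdered : ∀ t : T, IsWellOrder {s : T // R s t} (fun a b => R a.1 b.1)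
  root : ∃! r : T, ∀ s : T, ¬ R s r
  converseWellFounded : WellFounded (fun a b : T => R b a)

/-- The daughters (immediate successors) of a node. -/
def daughters {T : Type u} (R : T → T → Prop) (w : T) : Set T :=
  {v | R w v ∧ ¬ ∃ u, R w u ∧ R u v}

/-- The bouquet topology `σ_R`: the least topology extending the upset topology such that
whenever `w` has limit rank, `(v_i)` enumerates the daughters of `w` without repetition and
`n < ω`, the set `{w} ∪ ⋃_{i > n} ({v_i} ∪ R(v_i))` is open. -/
def sigmaTop {T : Type u} (R : T → T → Prop) : TopologicalSpace T :=
  upTop R ⊓ TopologicalSpace.generateFrom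
    {S : Set T | ∃ w : T, Order.IsSuccLimit (ptRank (upTop R) w) ∧
      ∃ v : ℕ → T, Function.Injective v ∧ Set.range v = daughters R w ∧
        ∃ n : ℕ, S = {w} ∪ ⋃ (i : ℕ) (_ : n < i), ({v i} ∪ {u | R (v i) u})}

/-! ## The club topology (via its neighborhood characterization) -/

/-- `C` is a club in (i.e. a closed unbounded subset of) the point `x`. -/
def IsClubIn {Θ : Ordinal.{u}} (C : Set Θ.ToType) (x : Θ.ToType) : Prop :=
  (∀ y ∈ C, y < x) ∧ (∀ z, z < x → ∃ y ∈ C, z < y) ∧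
    ∀ z, z < x → (∃ w, w < z) → (∀ w, w < z → ∃ y ∈ C, w < y ∧ y < z) → z ∈ C

/-- `t` is the club topology on `Θ`: a set `U` is a neighborhood of a point `x ∈ U` iff
`U` contains a club in `x` or `cf(x) < ℵ₁`. -/
def IsClubTop (Θ : Ordinal.{u}) (t : TopologicalSpace Θ.ToType) : Prop :=
  ∀ (U : Set Θ.ToType) (x : Θ.ToType), x ∈ U →
    (U ∈ @nhds _ t x ↔
      (Ordinal.cof (ordVal x) < Cardinal.aleph 1 ∨ ∃ C ⊆ U, IsClubIn C x))

/-- An ordinal is additively indecomposable if it is nonzero and closed under addition of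
smaller ordinals. -/
def AddIndecomposable (o : Ordinal.{u}) : Prop :=
  0 < o ∧ ∀ a < o, ∀ b < o, a + b < o


/-! ### Auxiliary: explicit construction of the hyperexponential family -/

theorem eFun_zero' : eFun (0 : Ordinal.{u}) = 0 := by
  show ω ^ (0 : Ordinal.{u}) - 1 = 0
  rw [opow_zero, Ordinal.sub_self]

theorem one_lt_omega0_opow {γ : Ordinal.{u}} (hγ : γ ≠ 0) : (1 : Ordinal.{u}) < ω ^ γ := by
  have h : (ω : Ordinal.{u}) ≤ ω ^ γ := by
    conv_lhs => rw [← opow_one (ω : Ordinal.{u})]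
    exact opow_le_opow_right omega0_pos (Ordinal.one_le_iff_ne_zero.2 hγ)
  exact one_lt_omega0.trans_le h

theorem eFun_eq_opow {x : Ordinal.{u}} (hx : x ≠ 0) : eFun x = ω ^ x := by
  have h : (1 : Ordinal.{u}) + ω ^ x = ω ^ x :=
    Ordinal.add_absorp (one_lt_omega0_opow hx) le_rfl
  show ω ^ x - 1 = ω ^ x
  conv_lhs => rw [← h]
  rw [Ordinal.add_sub_cancel]

theorem isNormal_eFun : Order.IsNormal (eFun : Ordinal.{u} → Ordinal.{u}) := by
  rw [Order.isNormal_iff]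
  constructor
  · intro a b hab
    rcases eq_or_ne a 0 with rfl | ha
    · rw [eFun_zero', eFun_eq_opow hab.ne']
      exact opow_pos b omega0_pos
    · rw [eFun_eq_opow ha, eFun_eq_opow (((pos_iff_ne_zero).2 ha).trans hab).ne']
      exact (Ordinal.opow_lt_opow_iff_right one_lt_omega0).2 hab
  · intro o ho a h
    rw [eFun_eq_opow (zero_lt_one.trans (Ordinal.one_lt_of_isSuccLimit ho)).ne']
    rw [Ordinal.opow_le_of_isSuccLimit omega0_ne_zero ho]
    intro b hb
    rcases eq_or_ne b 0 with rfl | hb0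
    · rw [opow_zero]
      have h1 := h 1 (Ordinal.one_lt_of_isSuccLimit ho)
      rw [eFun_eq_opow one_ne_zero, opow_one] at h1
      exact (one_lt_omega0.le).trans h1
    · rw [← eFun_eq_opow hb0]
      exact h b hb

theorem isNormal_id' : Order.IsNormal (id : Ordinal.{u} → Ordinal.{u}) := by
  rw [Order.isNormal_iff]
  refine ⟨strictMono_id, fun o ho a h => ?_⟩
  exact le_of_forall_lt fun b hb => (Order.lt_succ b).trans_le (h _ (ho.succ_lt hb))

theorem sub_opow_log_lt {α : Ordinal.{u}} (h0 : α ≠ 0) :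
    α - ω ^ Ordinal.log ω α < α := by
  refine lt_of_le_of_ne (Ordinal.sub_le_self _ _) fun heq => ?_
  have hle : ω ^ Ordinal.log ω α ≤ α := Ordinal.opow_log_le_self ω h0
  have hadd : ω ^ Ordinal.log ω α + α = α := by
    conv_rhs => rw [← Ordinal.add_sub_cancel_of_le hle, heq]
  have hn : ∀ n : ℕ, ω ^ Ordinal.log ω α * n + α = α := by
    intro n
    induction n with
    | zero => simp
    | succ n ih =>
      push_cast
      rw [mul_add_one, add_assoc, hadd, ih]
  have hω : ω ^ Order.succ (Ordinal.log ω α) ≤ α := by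
    rw [opow_succ, Ordinal.mul_le_iff_of_isSuccLimit Ordinal.isSuccLimit_omega0]
    intro b hb
    obtain ⟨n, rfl⟩ := Ordinal.lt_omega0.1 hb
    calc ω ^ Ordinal.log ω α * n ≤ ω ^ Ordinal.log ω α * n + α := le_self_add
      _ = α := hn n
  exact absurd hω (Ordinal.lt_opow_succ_log_self one_lt_omega0 α).not_ge

/-- The ordinal value of an element of `α.ToType`. -/
noncomputable def tval {α : Ordinal.{u}} (i : α.ToType) : Ordinal.{u} :=
  @Ordinal.typein α.ToType (· < ·) isWellOrder_lt i

theorem tval_lt {α : Ordinal.{u}} (i : α.ToType) : tval i < α :=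
  Ordinal.typein_lt_self i

theorem exists_tval {α β : Ordinal.{u}} (h : β < α) : ∃ i : α.ToType, tval i = β := by
  have hβ' : β < @Ordinal.type α.ToType (· < ·) isWellOrder_lt := by
    rw [Ordinal.type_toType]; exact h
  exact ⟨@Ordinal.enum α.ToType (· < ·) isWellOrder_lt ⟨β, hβ'⟩,
    @Ordinal.typein_enum α.ToType (· < ·) isWellOrder_lt _ hβ'⟩


open Classical in
/-- The canonical hyperexponential family built from `eFun`. -/
noncomputable def hexp (α : Ordinal.{u}) : Ordinal.{u} → Ordinal.{u} :=
  if h0 : α = 0 then id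
  else if hp : ω ^ Ordinal.log ω α = α then
    if h1 : α = 1 then eFun
    else Ordinal.derivFamily fun i : α.ToType => hexp (tval i)
  else hexp (ω ^ Ordinal.log ω α) ∘ hexp (α - ω ^ Ordinal.log ω α)
termination_by α
decreasing_by
  all_goals first
    | exact tval_lt _
    | exact lt_of_le_of_ne (Ordinal.opow_log_le_self ω h0) hp
    | exact sub_opow_log_lt h0

theorem hexp_def_zero : hexp (0 : Ordinal.{u}) = id := by
  rw [hexp]
  rw [dif_pos rfl]

theorem hexp_def_one : hexp (1 : Ordinal.{u}) = eFun := by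
  rw [hexp]
  rw [dif_neg one_ne_zero, dif_pos (by rw [Ordinal.log_one_right, opow_zero]), dif_pos rfl]

theorem hexp_def_deriv {α : Ordinal.{u}} (h0 : α ≠ 0) (h1 : α ≠ 1)
    (hp : ω ^ Ordinal.log ω α = α) :
    hexp α = Ordinal.derivFamily fun i : α.ToType => hexp (tval i) := by
  rw [hexp]
  rw [dif_neg h0, dif_pos hp, dif_neg h1]

theorem hexp_def_decomp {α : Ordinal.{u}} (h0 : α ≠ 0)
    (hp : ω ^ Ordinal.log ω α ≠ α) :
    hexp α = hexp (ω ^ Ordinal.log ω α) ∘ hexp (α - ω ^ Ordinal.log ω α) := by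
  rw [hexp]
  rw [dif_neg h0, dif_neg hp]

theorem hexp_omega0_opow_eq {γ : Ordinal.{u}} (hγ : γ ≠ 0) :
    hexp (ω ^ γ) =
      Ordinal.derivFamily fun i : (ω ^ γ).ToType => hexp (tval i) :=
  hexp_def_deriv (Ordinal.opow_ne_zero γ omega0_ne_zero) (one_lt_omega0_opow hγ).ne'
    (by rw [Ordinal.log_opow one_lt_omega0])

theorem isNormal_hexp (a : Ordinal.{u}) : Order.IsNormal (hexp a) := by
  induction a using Ordinal.induction with
  | _ a IH =>
    rcases eq_or_ne a 0 with rfl | h0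
    · rw [hexp_def_zero]; exact isNormal_id'
    rcases eq_or_ne a 1 with rfl | h1
    · rw [hexp_def_one]; exact isNormal_eFun
    rcases eq_or_ne (ω ^ Ordinal.log ω a) a with hp | hp
    · rw [hexp_def_deriv h0 h1 hp]
      exact Ordinal.isNormal_derivFamily _
    · rw [hexp_def_decomp h0 hp]
      exact (IH _ (lt_of_le_of_ne (Ordinal.opow_log_le_self ω h0) hp)).comp
        (IH _ (sub_opow_log_lt h0))

theorem hexp_zero_right (a : Ordinal.{u}) : hexp a 0 = 0 := by
  induction a using Ordinal.induction with
  | _ a IH =>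
    rcases eq_or_ne a 0 with rfl | h0
    · rw [hexp_def_zero]; rfl
    rcases eq_or_ne a 1 with rfl | h1
    · rw [hexp_def_one]; exact eFun_zero'
    rcases eq_or_ne (ω ^ Ordinal.log ω a) a with hp | hp
    · rw [hexp_def_deriv h0 h1 hp, Ordinal.derivFamily_zero]
      refine le_antisymm ?_ (zero_le)
      refine Ordinal.nfpFamily_le_fp (fun i => (isNormal_hexp _).monotone) le_rfl ?_
      intro i
      rw [IH _ (tval_lt i)]
    · rw [hexp_def_decomp h0 hp]
      show hexp _ (hexp _ 0) = 0
      rw [IH _ (sub_opow_log_lt h0), IH _ (lt_of_le_of_ne (Ordinal.opow_log_le_self ω h0) hp)]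

theorem hexp_fix {γ β : Ordinal.{u}} (hβ : β < ω ^ γ) (x : Ordinal.{u}) :
    hexp β (hexp (ω ^ γ) x) = hexp (ω ^ γ) x := by
  rcases eq_or_ne γ 0 with rfl | hγ
  · rw [opow_zero] at hβ
    rw [Ordinal.lt_one_iff_zero] at hβ
    subst hβ
    rw [hexp_def_zero]
    rfl
  · rw [hexp_omega0_opow_eq hγ]
    obtain ⟨i, hi⟩ := exists_tval hβ
    have key := Ordinal.derivFamily_fp
      (f := fun i : (ω ^ γ).ToType => hexp (tval i))
      (i := i) (isNormal_hexp _) x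
    rwa [hi] at key

theorem hexp_opow_add (γ c : Ordinal.{u}) :
    hexp (ω ^ γ + c) = hexp (ω ^ γ) ∘ hexp c := by
  rcases eq_or_ne c 0 with rfl | hc
  · rw [add_zero, hexp_def_zero, Function.comp_id]
  rcases le_or_gt (Ordinal.log ω c) γ with hle | hlt
  · have hα0 : ω ^ γ + c ≠ 0 :=
      ((opow_pos γ omega0_pos).trans_le (le_self_add)).ne'
    have hlog : Ordinal.log ω (ω ^ γ + c) = γ := by
      apply le_antisymm
      · have hcc : c < ω ^ Order.succ γ :=
          (Ordinal.lt_opow_succ_log_self one_lt_omega0 c).trans_le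
            (opow_le_opow_right omega0_pos (Order.succ_le_succ hle))
        have hsum : ω ^ γ + c < ω ^ Order.succ γ :=
          Ordinal.principal_add_omega0_opow _
            ((Ordinal.opow_lt_opow_iff_right one_lt_omega0).2 (Order.lt_succ γ)) hcc
        exact Order.lt_succ_iff.1 ((Ordinal.lt_opow_iff_log_lt one_lt_omega0 hα0).1 hsum)
      · exact (Ordinal.opow_le_iff_le_log one_lt_omega0 hα0).1 (le_self_add)
    have hne : ω ^ Ordinal.log ω (ω ^ γ + c) ≠ ω ^ γ + c := by
      rw [hlog]
      have : ω ^ γ + 0 < ω ^ γ + c := add_lt_add_right (pos_iff_ne_zero.2 hc) _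
      rw [add_zero] at this
      exact this.ne
    rw [hexp_def_decomp hα0 hne, hlog, Ordinal.add_sub_cancel]
  · have habs : ω ^ γ + c = c :=
      Ordinal.add_absorp ((Ordinal.opow_lt_opow_iff_right one_lt_omega0).2 hlt)
        (Ordinal.opow_log_le_self ω hc)
    rw [habs]
    funext x
    show hexp c x = hexp (ω ^ γ) (hexp c x)
    have hlt' : ω ^ γ < ω ^ Ordinal.log ω c :=
      (Ordinal.opow_lt_opow_iff_right one_lt_omega0).2 hlt
    rcases eq_or_ne (ω ^ Ordinal.log ω c) c with hpc | hpc
    · have key := hexp_fix hlt' x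
      rw [hpc] at key
      exact key.symm
    · have hx : hexp c x = hexp (ω ^ Ordinal.log ω c) (hexp (c - ω ^ Ordinal.log ω c) x) :=
        congrFun (hexp_def_decomp hc hpc) x
      rw [hx]
      exact (hexp_fix hlt' _).symm

theorem hexp_add (a b : Ordinal.{u}) : hexp (a + b) = hexp a ∘ hexp b := by
  induction a using Ordinal.induction with
  | _ a IH =>
    rcases eq_or_ne a 0 with rfl | h0
    · rw [zero_add, hexp_def_zero, Function.id_comp]
    rcases eq_or_ne (ω ^ Ordinal.log ω a) a with hp | hp
    · rw [← hp]
      exact hexp_opow_add _ b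
    · have hr : a - ω ^ Ordinal.log ω a < a := sub_opow_log_lt h0
      have ha : ω ^ Ordinal.log ω a + (a - ω ^ Ordinal.log ω a) = a :=
        Ordinal.add_sub_cancel_of_le (Ordinal.opow_log_le_self ω h0)
      rw [← ha, add_assoc, hexp_opow_add, hexp_opow_add, IH _ hr]
      rfl

theorem hexp_le_of_family (F : Ordinal.{u} → Ordinal.{u} → Ordinal.{u})
    (hN : ∀ a, Order.IsNormal (F a)) (hone : F 1 = eFun)
    (hadd : ∀ a b, F (a + b) = F a ∘ F b) : ∀ a b, hexp a b ≤ F a b := by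
  intro a
  induction a using Ordinal.induction with
  | _ a IH =>
    intro b
    rcases eq_or_ne a 0 with rfl | h0
    · rw [hexp_def_zero]
      exact (hN 0).strictMono.le_apply
    rcases eq_or_ne a 1 with rfl | h1
    · rw [hexp_def_one, hone]
    rcases eq_or_ne (ω ^ Ordinal.log ω a) a with hp | hp
    · induction b using Ordinal.limitRecOn with
      | zero =>
        rw [hexp_zero_right]
        exact zero_le
      | add_one b ihb =>
        rw [hexp_def_deriv h0 h1 hp, Ordinal.derivFamily_add_one, ← hexp_def_deriv h0 h1 hp]
        refine Ordinal.nfpFamily_le_fp (fun i => (isNormal_hexp _).monotone) ?_ ?_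
        · rw [Order.add_one_le_iff]
          exact ihb.trans_lt ((hN a).strictMono (lt_add_one b))
        · intro i
          have hti := tval_lt i
          have habs : tval i + a = a :=
            Ordinal.add_absorp (by rw [hp]; exact hti) hp.le
          calc hexp (tval i) (F a (b + 1))
              ≤ F (tval i) (F a (b + 1)) := IH _ hti _
            _ = F a (b + 1) := by
                conv_rhs => rw [← habs, hadd]
                rfl
      | limit b hb ihb =>
        rw [(isNormal_hexp a).le_iff_forall_le hb]
        intro b' hb'
        exact (ihb b' hb').trans ((hN a).monotone hb'.le)
    · have hr : a - ω ^ Ordinal.log ω a < a := sub_opow_log_lt h0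
      have hl : ω ^ Ordinal.log ω a < a :=
        lt_of_le_of_ne (Ordinal.opow_log_le_self ω h0) hp
      have ha : ω ^ Ordinal.log ω a + (a - ω ^ Ordinal.log ω a) = a :=
        Ordinal.add_sub_cancel_of_le (Ordinal.opow_log_le_self ω h0)
      rw [hexp_def_decomp h0 hp]
      show hexp (ω ^ Ordinal.log ω a) (hexp (a - ω ^ Ordinal.log ω a) b) ≤ F a b
      calc hexp (ω ^ Ordinal.log ω a) (hexp (a - ω ^ Ordinal.log ω a) b)
          ≤ hexp (ω ^ Ordinal.log ω a) (F (a - ω ^ Ordinal.log ω a) b) :=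
            (isNormal_hexp _).monotone (IH _ hr b)
        _ ≤ F (ω ^ Ordinal.log ω a) (F (a - ω ^ Ordinal.log ω a) b) := IH _ hl _
        _ = F a b := by
            conv_rhs => rw [← ha, hadd]
            rfl

theorem hexp_lt_limit {γ ξ ζ : Ordinal.{u}} (hγ : γ ≠ 0)
    (hζ : ζ < hexp (ω ^ γ) (ξ + 1)) :
    ∃ δ < ω ^ γ, ζ < hexp δ (hexp (ω ^ γ) ξ + 1) := by
  have hfold : ∀ l : List (ω ^ γ).ToType, ∃ s < ω ^ γ, ∀ x : Ordinal.{u},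
      List.foldr (fun i : (ω ^ γ).ToType => hexp (tval i)) x l
        = hexp s x := by
    intro l
    induction l with
    | nil =>
      exact ⟨0, opow_pos γ omega0_pos, fun x => by rw [hexp_def_zero]; rfl⟩
    | cons i l ih =>
      obtain ⟨s, hs, he⟩ := ih
      refine ⟨tval i + s,
        Ordinal.principal_add_omega0_opow γ (tval_lt i) hs, fun x => ?_⟩
      rw [List.foldr_cons, he, hexp_add]
      rfl
  rw [add_one_eq_succ, hexp_omega0_opow_eq hγ, Ordinal.derivFamily_succ,
    ← hexp_omega0_opow_eq hγ] at hζ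
  obtain ⟨l, hl⟩ := Ordinal.lt_nfpFamily_iff.1 hζ
  obtain ⟨s, hs, he⟩ := hfold l
  rw [he] at hl
  refine ⟨s, hs, ?_⟩
  rwa [add_one_eq_succ]

/-- If `λ` is an additively indecomposable limit ordinal and
`0 < f(η) < e^λ(ξ+1)` for all `η < λ`, then `lim_{η→λ} e^η(e^λ(ξ) + f(η)) = e^λ(ξ+1)`. -/
theorem hyperexp_limit_formula
    (E : Ordinal.{u} → Ordinal.{u} → Ordinal.{u}) (hE : IsHyperexpFamily E)
    (ξ lam : Ordinal.{u}) (hlim : Order.IsSuccLimit lam) (hind : AddIndecomposable lam)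
    (f : Ordinal.{u} → Ordinal.{u}) (hf : ∀ η < lam, 0 < f η ∧ f η < E lam (ξ + 1)) :
    ∀ ζ < E lam (ξ + 1), ∃ δ < lam, ∀ η, δ < η → η < lam →
      ζ < E η (E lam ξ + f η) ∧ E η (E lam ξ + f η) ≤ E lam (ξ + 1) := by
  have hEH : E = hexp := funext fun a => funext fun b =>
    le_antisymm (hE.2.2.2 hexp isNormal_hexp hexp_def_one hexp_add a b)
      (hexp_le_of_family E hE.1 hE.2.1 hE.2.2.1 a b)
  subst hEH
  obtain ⟨γ, rfl⟩ : ∃ γ : Ordinal.{u}, lam = ω ^ γ := by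
    rcases Ordinal.principal_add_iff_zero_or_omega0_opow.1
      (fun a b ha hb => hind.2 a ha b hb) with h | h
    · exact absurd h hind.1.ne'
    · obtain ⟨γ, hγ⟩ := h
      exact ⟨γ, hγ.symm⟩
  have hγ : γ ≠ 0 := by
    intro h
    have h1 := Ordinal.one_lt_of_isSuccLimit hlim
    rw [h, opow_zero] at h1
    exact lt_irrefl _ h1
  intro ζ hζ
  -- the target value and its additive indecomposability
  have hT0 : hexp (ω ^ γ) (ξ + 1) ≠ 0 := by
    have h1 : (0 : Ordinal.{u}) < ξ + 1 := zero_lt_one.trans_le (le_add_self)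
    exact (h1.trans_le (isNormal_hexp (ω ^ γ)).strictMono.le_apply).ne'
  have hfix1 : hexp (ω ^ γ) (ξ + 1) = eFun (hexp (ω ^ γ) (ξ + 1)) := by
    have h1l : (1 : Ordinal.{u}) + ω ^ γ = ω ^ γ :=
      Ordinal.add_absorp (b := γ) (one_lt_omega0_opow hγ) le_rfl
    conv_lhs => rw [← h1l, hexp_add, hexp_def_one]
    rfl
  have hTfix : ω ^ (hexp (ω ^ γ) (ξ + 1)) = hexp (ω ^ γ) (ξ + 1) := by
    conv_rhs => rw [hfix1, eFun_eq_opow hT0]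
  obtain ⟨δ, hδα, hδ⟩ := hexp_lt_limit hγ hζ
  refine ⟨δ, hδα, fun η hδη hηα => ?_⟩
  obtain ⟨hfpos, hflt⟩ := hf η hηα
  constructor
  · -- lower bound
    have hsplit : δ + (η - δ) = η := Ordinal.add_sub_cancel_of_le hδη.le
    have hcomp : ∀ y : Ordinal.{u}, hexp η y = hexp δ (hexp (η - δ) y) := by
      intro y
      conv_lhs => rw [← hsplit, hexp_add]
      rfl
    have hchain : hexp δ (hexp (ω ^ γ) ξ + 1) ≤ hexp η (hexp (ω ^ γ) ξ + f η) := by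
      rw [hcomp]
      calc hexp δ (hexp (ω ^ γ) ξ + 1)
          ≤ hexp δ (hexp (ω ^ γ) ξ + f η) :=
            (isNormal_hexp δ).monotone (add_le_add_right (Order.one_le_iff_pos.2 hfpos) _)
        _ ≤ hexp δ (hexp (η - δ) (hexp (ω ^ γ) ξ + f η)) :=
            (isNormal_hexp δ).monotone (isNormal_hexp _).strictMono.le_apply
    exact hδ.trans_le hchain
  · -- upper bound
    have hηfix : hexp η (hexp (ω ^ γ) (ξ + 1)) = hexp (ω ^ γ) (ξ + 1) := by
      have habs : η + ω ^ γ = ω ^ γ := Ordinal.add_absorp (b := γ) hηα le_rfl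
      conv_rhs => rw [← habs, hexp_add]
      rfl
    have harg : hexp (ω ^ γ) ξ + f η < hexp (ω ^ γ) (ξ + 1) := by
      have h2 : hexp (ω ^ γ) ξ < hexp (ω ^ γ) (ξ + 1) := by
        have := (isNormal_hexp (ω ^ γ)).strictMono (Order.lt_succ ξ)
        rwa [← add_one_eq_succ] at this
      have := Ordinal.principal_add_omega0_opow (hexp (ω ^ γ) (ξ + 1))
        (by rw [hTfix]; exact h2) (by rw [hTfix]; exact hflt)
      rwa [hTfix] at this
    calc hexp η (hexp (ω ^ γ) ξ + f η)
        ≤ hexp η (hexp (ω ^ γ) (ξ + 1)) := (isNormal_hexp η).monotone harg.le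
      _ = hexp (ω ^ γ) (ξ + 1) := hηfix

end
end

section
/- For every ordinal ξ > 0 there exist unique ordinals α and β such that β is either equal to 1 or additively decomposable (i.e., β = γ + δ for some γ, δ < β), and ξ = e^α(β). -/
open Ordinal Set

noncomputable section

universe u

namespace HNFAux

/-- Admissible second components: `1` or additively decomposable. -/
def Adm (b : Ordinal.{u}) : Prop := b = 1 ∨ ∃ γ < b, ∃ δ < b, b = γ + δ

theorem eFun_zero : eFun (0 : Ordinal.{u}) = 0 := by
  rw [eFun, opow_zero, Ordinal.sub_self]

theorem eFun_of_ne_zero {y : Ordinal.{u}} (hy : y ≠ 0) : eFun y = ω ^ y := by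
  have h1 : (1 : Ordinal.{u}) + ω ^ y = ω ^ y := by
    refine Ordinal.add_absorp (b := 1) ?_ ?_
    · rw [opow_one]; exact Ordinal.one_lt_omega0
    · exact Ordinal.opow_le_opow_right Ordinal.omega0_pos (Ordinal.one_le_iff_ne_zero.2 hy)
  rw [eFun]
  conv_lhs => rw [← h1]
  rw [Ordinal.add_sub_cancel]

theorem omega0_opow_gt_one {w : Ordinal.{u}} (hw : w ≠ 0) : 1 < ω ^ w := by
  refine lt_of_lt_of_le Ordinal.one_lt_omega0 ?_
  calc ω = ω ^ (1 : Ordinal.{u}) := (opow_one _).symm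
  _ ≤ ω ^ w := Ordinal.opow_le_opow_right Ordinal.omega0_pos (Ordinal.one_le_iff_ne_zero.2 hw)

variable {E : Ordinal.{u} → Ordinal.{u} → Ordinal.{u}}

theorem Eadd (hE : IsHyperexpFamily E) (a c x : Ordinal.{u}) :
    E (a + c) x = E a (E c x) := congrFun (hE.2.2.1 a c) x

theorem self_le_E (hE : IsHyperexpFamily E) (a x : Ordinal.{u}) : x ≤ E a x :=
  (hE.1 a).strictMono.le_apply

/-- `E 0` is the identity. -/
theorem E0 (hE : IsHyperexpFamily E) (x : Ordinal.{u}) : E 0 x = x := by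
  classical
  obtain ⟨hn, h1, ha, hm⟩ := hE
  set F : Ordinal.{u} → Ordinal.{u} → Ordinal.{u} :=
    fun a y => if a = 0 then y else E a y with hF
  have hFn : ∀ a, Order.IsNormal (F a) := by
    intro a
    rcases eq_or_ne a 0 with rfl | h
    · simp only [hF, if_pos rfl]; exact Order.IsNormal.id
    · simpa [hF, h] using hn a
  have hF1 : F 1 = eFun := by
    funext y
    simp only [hF, one_ne_zero, if_false]
    exact congrFun h1 y
  have hFa : ∀ a b, F (a + b) = F a ∘ F b := by
    intro a b
    funext y
    rcases eq_or_ne a 0 with rfl | haz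
    · simp [hF, zero_add]
    · rcases eq_or_ne b 0 with rfl | hbz
      · simp [hF, add_zero, haz]
      · have hab : a + b ≠ 0 := fun h0 => haz (Ordinal.add_eq_zero_iff.1 h0).1
        simp only [hF, Function.comp_apply, if_neg haz, if_neg hbz, if_neg hab]
        exact congrFun (ha a b) y
  have h := hm F hFn hF1 hFa 0 x
  simp only [hF, if_pos rfl] at h
  exact le_antisymm h (hn 0).strictMono.le_apply

/-- `E a 0 = 0`. -/
theorem Ezero (hE : IsHyperexpFamily E) (a : Ordinal.{u}) : E a 0 = 0 := by
  classical
  obtain ⟨hn, h1, ha, hm⟩ := hE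
  set F : Ordinal.{u} → Ordinal.{u} → Ordinal.{u} :=
    fun a y => if y = 0 then 0 else E a y with hF
  have hFn : ∀ a, Order.IsNormal (F a) := by
    intro a
    rw [Order.isNormal_iff]
    constructor
    · intro x y hxy
      rcases eq_or_ne x 0 with rfl | hx
      · have hy : y ≠ 0 := hxy.ne'
        simp only [hF, if_pos rfl, if_neg hy]
        exact lt_of_lt_of_le hxy (hn a).strictMono.le_apply
      · have hy : y ≠ 0 := (lt_trans (pos_iff_ne_zero.2 hx) hxy).ne'
        simp only [hF, if_neg hx, if_neg hy]
        exact (hn a).strictMono hxy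
    · intro o ho c hc
      simp only [hF, if_neg ho.pos.ne']
      refine ((hn a).le_iff_forall_le ho).2 fun b hb => ?_
      rcases eq_or_ne b 0 with rfl | hb0
      · have h1o : (1 : Ordinal.{u}) < o := Ordinal.one_lt_of_isSuccLimit ho
        have := hc 1 h1o
        simp only [hF, if_neg one_ne_zero] at this
        exact le_trans ((hn a).monotone zero_le_one) this
      · have := hc b hb
        simpa only [hF, if_neg hb0] using this
  have hF1 : F 1 = eFun := by
    funext y
    rcases eq_or_ne y 0 with rfl | hy
    · simp [hF, eFun_zero]
    · simp only [hF, if_neg hy]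
      exact congrFun h1 y
  have hFa : ∀ a b, F (a + b) = F a ∘ F b := by
    intro a b
    funext y
    rcases eq_or_ne y 0 with rfl | hy
    · simp [hF]
    · have hEby : E b y ≠ 0 :=
        (lt_of_lt_of_le (pos_iff_ne_zero.2 hy) (hn b).strictMono.le_apply).ne'
      simp only [hF, Function.comp_apply, if_neg hy, if_neg hEby]
      exact congrFun (ha a b) y
  have h := hm F hFn hF1 hFa a 0
  simp only [hF, if_pos rfl] at h
  exact nonpos_iff_eq_zero.1 h

/-- Values of `E c` at nonzero points, `c ≠ 0`, are `ω`-powers with nonzero exponent. -/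
theorem Eshape (hE : IsHyperexpFamily E) {c x : Ordinal.{u}} (hc : c ≠ 0) (hx : x ≠ 0) :
    ∃ w : Ordinal.{u}, w ≠ 0 ∧ E c x = ω ^ w := by
  have h := Ordinal.add_sub_cancel_of_le (Ordinal.one_le_iff_ne_zero.2 hc)
  have hz : E (c - 1) x ≠ 0 :=
    (lt_of_lt_of_le (pos_iff_ne_zero.2 hx) (self_le_E hE _ _)).ne'
  refine ⟨E (c - 1) x, hz, ?_⟩
  calc E c x = E (1 + (c - 1)) x := by rw [h]
  _ = E 1 (E (c - 1) x) := Eadd hE _ _ _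
  _ = eFun (E (c - 1) x) := congrFun hE.2.1 _
  _ = ω ^ E (c - 1) x := eFun_of_ne_zero hz

theorem Emono_index (hE : IsHyperexpFamily E) {a a' : Ordinal.{u}} (h : a ≤ a')
    (x : Ordinal.{u}) : E a x ≤ E a' x := by
  have hc := Ordinal.add_sub_cancel_of_le h
  calc E a x ≤ E a (E (a' - a) x) := (hE.1 a).monotone (self_le_E hE _ _)
  _ = E a' x := by rw [← Eadd hE, hc]

theorem self_le_E_one (hE : IsHyperexpFamily E) (a : Ordinal.{u}) : a ≤ E a 1 := by
  induction a using Ordinal.induction with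
  | h j IH =>
    by_contra hcon
    push_neg at hcon
    have key : ∀ k < j, k < E j 1 := by
      intro k hk
      have hc0 : j - k ≠ 0 := by
        intro h0
        have := Ordinal.sub_eq_zero_iff_le.1 h0
        exact absurd this (not_le.2 hk)
      obtain ⟨w, hw, hwe⟩ := Eshape hE hc0 one_ne_zero
      have h1 : (1 : Ordinal.{u}) < E (j - k) 1 := hwe ▸ omega0_opow_gt_one hw
      have : E j 1 = E k (E (j - k) 1) := by
        rw [← Eadd hE, Ordinal.add_sub_cancel_of_le hk.le]
      calc k ≤ E k 1 := IH k hk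
      _ < E k (E (j - k) 1) := (hE.1 k).strictMono h1
      _ = E j 1 := this.symm
    exact absurd (key (E j 1) hcon) (lt_irrefl _)

/-- Uniqueness half. -/
theorem unique_aux (hE : IsHyperexpFamily E) {u v u' v' : Ordinal.{u}} (huu' : u ≤ u')
    (hv : Adm v) (hv' : Adm v') (he : E u v = E u' v') : u = u' ∧ v = v' := by
  have hc := Ordinal.add_sub_cancel_of_le huu'
  have he2 : E u v = E u (E (u' - u) v') := by rw [← Eadd hE, hc]; exact he
  have hvv : v = E (u' - u) v' := (hE.1 u).strictMono.injective he2
  rcases eq_or_ne (u' - u) 0 with h0 | h0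
  · have : u' = u := by rw [← hc, h0, add_zero]
    rw [h0] at hvv
    exact ⟨this.symm, hvv.trans (E0 hE v')⟩
  · exfalso
    have hv'0 : v' ≠ 0 := by
      rcases hv' with rfl | ⟨γ, hγ, δ, hδ, hsum⟩
      · exact one_ne_zero
      · exact (pos_iff_ne_zero.1 (lt_of_le_of_lt (zero_le (a := γ)) hγ))
    obtain ⟨w, hw, hwe⟩ := Eshape hE h0 hv'0
    rw [hwe] at hvv
    rcases hv with rfl | ⟨γ, hγ, δ, hδ, hsum⟩
    · exact absurd hvv.symm (ne_of_gt (omega0_opow_gt_one hw))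
    · rw [hvv] at hγ hδ hsum
      exact absurd hsum (ne_of_gt (show γ + δ < ω ^ w from Ordinal.principal_add_omega0_opow w hγ hδ))

theorem no_gap (hE : IsHyperexpFamily E) (μ m ξ γ : Ordinal.{u})
    (hμ : μ = ω ^ m) (hm0 : m ≠ 0)
    (hfix : ∀ r < μ, E r ξ = ξ)
    (hgap1 : E μ γ < ξ) (hgap2 : ξ < E μ (γ + 1)) : False := by
  classical
  have hn := hE.1
  have h1 := hE.2.1
  set ν : Ordinal.{u} := ω ^ (m + 1) with hν
  have μpos : (0 : Ordinal.{u}) < μ := hμ ▸ Ordinal.opow_pos m Ordinal.omega0_pos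
  have hμ0' : μ ≠ 0 := μpos.ne'
  have ν0 : ν ≠ 0 := (Ordinal.opow_pos _ Ordinal.omega0_pos).ne'
  have hμν : μ < ν := by
    rw [hμ, hν]
    exact (Ordinal.opow_lt_opow_iff_right Ordinal.one_lt_omega0).2
      (by rw [Ordinal.add_one_eq_succ]; exact Order.lt_succ m)
  have hν_mul : μ * ω = ν := by
    rw [hμ, hν, ← opow_succ, Ordinal.add_one_eq_succ]
  have habs : ∀ {r c : Ordinal.{u}}, r < ν → ν ≤ c → r + c = c := by
    intro r c hr hc
    exact Ordinal.add_absorp (hν ▸ hr) (hν ▸ hc)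
  have habsμ : ∀ {r c : Ordinal.{u}}, r < μ → μ ≤ c → r + c = c := by
    intro r c hr hc
    exact Ordinal.add_absorp (hμ ▸ hr) (hμ ▸ hc)
  have hsucc_le : ∀ {p q : Ordinal.{u}}, p < q → p + 1 ≤ q := by
    intro p q h
    rw [Ordinal.add_one_eq_succ]
    exact Order.succ_le_of_lt h
  have hlt_succ : ∀ z : Ordinal.{u}, z < z + 1 := by
    intro z
    rw [Ordinal.add_one_eq_succ]
    exact Order.lt_succ z
  have hγξ : γ < ξ := lt_of_le_of_lt (self_le_E hE μ γ) hgap1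
  have hγ1ξ : γ + 1 ≤ ξ := hsucc_le hγξ
  -- the modified normal function at level μ
  set Fm : Ordinal.{u} → Ordinal.{u} :=
    fun x => if x ≤ γ then E μ x else if x = γ + 1 then ξ else E μ (γ + (x - (γ + 1)))
    with hFm
  have hFm1 : ∀ x ≤ γ, Fm x = E μ x := by
    intro x hx; simp only [hFm, if_pos hx]
  have hFm2 : Fm (γ + 1) = ξ := by
    have h : ¬ (γ + 1 ≤ γ) := not_le.2 (hlt_succ γ)
    simp only [hFm, if_neg h, if_pos rfl, if_true]
  have hFm3 : ∀ x, γ + 1 < x → Fm x = E μ (γ + (x - (γ + 1))) := by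
    intro x hx
    have h1' : ¬ x ≤ γ := not_le.2 (lt_trans (hlt_succ γ) hx)
    have h2' : x ≠ γ + 1 := hx.ne'
    simp only [hFm, if_neg h1', if_neg h2']
  have hxy : ∀ {x : Ordinal.{u}}, γ + 1 < x → (γ + 1) + (x - (γ + 1)) = x :=
    fun hx => Ordinal.add_sub_cancel_of_le hx.le
  have hy0 : ∀ {x : Ordinal.{u}}, γ + 1 < x → x - (γ + 1) ≠ 0 := by
    intro x hx h0
    exact absurd (Ordinal.sub_eq_zero_iff_le.1 h0) (not_le.2 hx)
  have hbig : ∀ {x : Ordinal.{u}}, γ + 1 < x → ξ < E μ (γ + (x - (γ + 1))) := by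
    intro x hx
    refine lt_of_lt_of_le hgap2 ((hn μ).monotone ?_)
    exact add_le_add_right (Ordinal.one_le_iff_ne_zero.2 (hy0 hx)) γ
  have hFmono : StrictMono Fm := by
    intro x y hxy'
    rcases le_or_gt y γ with hyγ | hyγ
    · rw [hFm1 x (le_of_lt (lt_of_lt_of_le hxy' hyγ)), hFm1 y hyγ]
      exact (hn μ).strictMono hxy'
    · have hy1le : γ + 1 ≤ y := hsucc_le hyγ
      rcases eq_or_lt_of_le hy1le with heq | hgt
      · have hxγ : x ≤ γ := by
          rw [← heq, Ordinal.add_one_eq_succ, Order.lt_succ_iff] at hxy'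
          exact hxy'
        rw [hFm1 x hxγ, ← heq, hFm2]
        exact lt_of_le_of_lt ((hn μ).monotone hxγ) hgap1
      · rw [hFm3 y hgt]
        rcases le_or_gt x γ with hxγ | hxγ
        · rw [hFm1 x hxγ]
          exact lt_trans (lt_of_le_of_lt ((hn μ).monotone hxγ) hgap1) (hbig hgt)
        · have hx1le : γ + 1 ≤ x := hsucc_le hxγ
          rcases eq_or_lt_of_le hx1le with heq2 | hgt2
          · rw [← heq2, hFm2]
            exact hbig hgt
          · rw [hFm3 x hgt2]
            apply (hn μ).strictMono
            apply add_lt_add_right ?_ γ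
            have h3 : (γ + 1) + (x - (γ + 1)) < (γ + 1) + (y - (γ + 1)) := by
              rw [hxy hgt2, hxy hgt]; exact hxy'
            exact lt_of_add_lt_add_left h3
  have hFlim : ∀ o : Ordinal.{u}, Order.IsSuccLimit o → ∀ c, (∀ b < o, Fm b ≤ c) → Fm o ≤ c := by
    intro o ho c hc
    rcases le_or_gt o γ with hoγ | hoγ
    · rw [hFm1 o hoγ]
      refine ((hn μ).le_iff_forall_le ho).2 fun b hb => ?_
      have := hc b hb
      rwa [hFm1 b (le_of_lt (lt_of_lt_of_le hb hoγ))] at this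
    · have ho1 : γ + 1 < o := by
        rcases eq_or_lt_of_le (hsucc_le hoγ) with heq | h
        · exfalso
          apply Order.not_isSuccLimit_succ γ
          rw [← Ordinal.add_one_eq_succ, heq]
          exact ho
        · exact h
      rw [hFm3 o ho1]
      have hyo : (γ + 1) + (o - (γ + 1)) = o := hxy ho1
      have hylim : Order.IsSuccLimit (o - (γ + 1)) := by
        rcases Ordinal.zero_or_succ_or_isSuccLimit (o - (γ + 1)) with h0 | ⟨z, hz⟩ | hl
        · exact absurd h0 (hy0 ho1)
        · exfalso
          apply Order.not_isSuccLimit_succ ((γ + 1) + z)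
          have : o = Order.succ ((γ + 1) + z) := by
            rw [← hyo, ← hz, Ordinal.add_succ]
          rw [← this]
          exact ho
        · exact hl
      have hγylim : Order.IsSuccLimit (γ + (o - (γ + 1))) := Ordinal.isSuccLimit_add γ hylim
      refine ((hn μ).le_iff_forall_le hγylim).2 fun z hz => ?_
      rcases le_or_gt z γ with hzγ | hzγ
      · have hzo : z < o := lt_of_le_of_lt hzγ (lt_trans (hlt_succ γ) ho1)
        have := hc z hzo
        rwa [hFm1 z hzγ] at this
      · have hzw : γ + (z - γ) = z := Ordinal.add_sub_cancel_of_le hzγ.le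
        have hw0 : z - γ ≠ 0 := by
          intro h0
          rw [h0, add_zero] at hzw
          exact absurd hzw (ne_of_lt hzγ)
        have hwy : z - γ < o - (γ + 1) := by
          have h3 : γ + (z - γ) < γ + (o - (γ + 1)) := by rw [hzw]; exact hz
          exact lt_of_add_lt_add_left h3
        have hb : γ + 1 + (z - γ) < o := by
          rw [← hyo]
          exact add_lt_add_right hwy (γ + 1)
        have hbgt : γ + 1 < γ + 1 + (z - γ) := by
          conv_lhs => rw [← add_zero (γ + 1)]
          exact add_lt_add_right (pos_iff_ne_zero.2 hw0) (γ + 1)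
        have hcb := hc _ hb
        rw [hFm3 _ hbgt, Ordinal.add_sub_cancel, hzw] at hcb
        exact hcb
  have hFmNorm : Order.IsNormal Fm :=
    Order.isNormal_iff.2 ⟨hFmono, hFlim⟩
  have hfixFm : ∀ z : Ordinal.{u}, (z = 0 ∨ ∃ w : Ordinal.{u}, w ≠ 0 ∧ z = ω ^ w) → E μ z = z → Fm z = z := by
    intro z hshape hz
    rcases le_or_gt z γ with hzγ | hzγ
    · rw [hFm1 z hzγ, hz]
    · rcases hshape with rfl | ⟨w, hw0, hwz⟩
      · exact absurd hzγ (not_lt.2 (zero_le (a := γ)))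
      · have hz1 : γ + 1 < z := by
          have h3 : E μ (γ + 1) ≤ E μ z := (hn μ).monotone (hsucc_le hzγ)
          have h4 : ξ < z := lt_of_lt_of_le hgap2 (h3.trans_eq hz)
          exact lt_of_le_of_lt hγ1ξ h4
        have habs1 : (γ + 1) + z = z := by
          rw [hwz]
          exact Ordinal.add_absorp (show γ + 1 < ω ^ w by rw [← hwz]; exact hz1) le_rfl
        have hsub : z - (γ + 1) = z := Ordinal.sub_eq_of_add_eq habs1
        have habs2 : γ + z = z := by
          rw [hwz]
          exact Ordinal.add_absorp (show γ < ω ^ w by rw [← hwz]; exact lt_trans (hlt_succ γ) hz1) le_rfl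
        rw [hFm3 z hz1, hsub, habs2, hz]
  have hFmrange : ∀ x, (∃ y, Fm x = E μ y) ∨ Fm x = ξ := by
    intro x
    rcases le_or_gt x γ with hxγ | hxγ
    · exact Or.inl ⟨x, hFm1 x hxγ⟩
    · rcases eq_or_lt_of_le (hsucc_le hxγ) with heq | hgt
      · exact Or.inr (by rw [← heq, hFm2])
      · exact Or.inl ⟨γ + (x - (γ + 1)), hFm3 x hgt⟩
  have hErFm : ∀ r < μ, ∀ x, E r (Fm x) = Fm x := by
    intro r hr x
    rcases hFmrange x with ⟨y, hy⟩ | hy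
    · rw [hy, ← Eadd hE, habsμ hr le_rfl]
    · rw [hy]
      exact hfix r hr
  have hkey : ∀ c, ν ≤ c → ∀ x, Fm (E c x) = E c x := by
    intro c hc x
    have hc0 : c ≠ 0 := by
      intro h
      rw [h] at hc
      exact ν0 (nonpos_iff_eq_zero.1 hc)
    have hEfix : E μ (E c x) = E c x := by
      rw [← Eadd hE, habs hμν hc]
    refine hfixFm _ ?_ hEfix
    rcases eq_or_ne x 0 with rfl | hx
    · left; rw [Ezero hE]
    · right; exact Eshape hE hc0 hx
  have hIterNorm : ∀ n : ℕ, Order.IsNormal (Fm^[n]) := by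
    intro n
    induction n with
    | zero => rw [Function.iterate_zero]; exact Order.IsNormal.id
    | succ k ih =>
      rw [Function.iterate_succ']
      exact hFmNorm.comp ih
  have hErIter : ∀ r < μ, ∀ n : ℕ, n ≠ 0 → ∀ x, E r (Fm^[n] x) = Fm^[n] x := by
    intro r hr n hn0 x
    obtain ⟨k, rfl⟩ := Nat.exists_eq_succ_of_ne_zero hn0
    rw [Function.iterate_succ_apply']
    exact hErFm r hr _
  -- conversion of small ordinals to naturals
  set toN : Ordinal.{u} → ℕ :=
    fun o => if h : o < ω then Classical.choose (Ordinal.lt_omega0.1 h) else 0 with htoN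
  have htoN1 : ∀ o : Ordinal.{u}, o < ω → ((toN o : ℕ) : Ordinal.{u}) = o := by
    intro o h
    have h3 : toN o = Classical.choose (Ordinal.lt_omega0.1 h) := dif_pos h
    rw [h3]
    exact (Classical.choose_spec (Ordinal.lt_omega0.1 h)).symm
  have htoN2 : ∀ k : ℕ, toN (k : Ordinal.{u}) = k := by
    intro k
    have := htoN1 (k : Ordinal.{u}) (Ordinal.nat_lt_omega0 k)
    exact_mod_cast this
  -- the competing family
  set F : Ordinal.{u} → Ordinal.{u} → Ordinal.{u} :=
    fun a x => E (ν * (a / ν)) (Fm^[toN (a % ν / μ)] (E (a % ν % μ) x)) with hFdef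
  have hsmall : ∀ (k : ℕ) (r : Ordinal.{u}), r < μ → μ * k + r < ν := by
    intro k r hr
    have h1' : μ * k + r < μ * ((k : Ordinal.{u}) + 1) := by
      rw [Ordinal.add_one_eq_succ, Ordinal.mul_succ]
      exact add_lt_add_right hr _
    have h2' : μ * ((k : Ordinal.{u}) + 1) ≤ μ * ω := by
      refine mul_le_mul_right ?_ μ
      have : ((k + 1 : ℕ) : Ordinal.{u}) ≤ ω := (Ordinal.nat_lt_omega0 (k + 1)).le
      simpa using this
    exact lt_of_lt_of_le h1' (h2'.trans_eq hν_mul)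
  have hrep : ∀ (q : Ordinal.{u}) (k : ℕ) (r : Ordinal.{u}), r < μ → ∀ x,
      F (ν * q + (μ * k + r)) x = E (ν * q) (Fm^[k] (E r x)) := by
    intro q k r hr x
    have hs : μ * k + r < ν := hsmall k r hr
    have hdiv : (ν * q + (μ * k + r)) / ν = q := by
      rw [Ordinal.mul_add_div _ ν0, Ordinal.div_eq_zero_of_lt hs, add_zero]
    have hmod : (ν * q + (μ * k + r)) % ν = μ * k + r := by
      rw [Ordinal.mod_def, hdiv, Ordinal.add_sub_cancel]
    have hdiv2 : (μ * (k : Ordinal.{u}) + r) / μ = (k : Ordinal.{u}) := by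
      rw [Ordinal.mul_add_div _ hμ0', Ordinal.div_eq_zero_of_lt hr, add_zero]
    have hmod2 : (μ * (k : Ordinal.{u}) + r) % μ = r := by
      rw [Ordinal.mod_def, hdiv2, Ordinal.add_sub_cancel]
    simp only [hFdef, hdiv, hmod, hdiv2, hmod2, htoN2]
  have hdec : ∀ a : Ordinal.{u}, ∃ (q : Ordinal.{u}) (k : ℕ) (r : Ordinal.{u}),
      r < μ ∧ a = ν * q + (μ * k + r) := by
    intro a
    have hdivlt : a % ν / μ < ω := by
      rw [Ordinal.div_lt hμ0', hν_mul]
      exact Ordinal.mod_lt a ν0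
    obtain ⟨k, hk⟩ := Ordinal.lt_omega0.1 hdivlt
    refine ⟨a / ν, k, a % ν % μ, Ordinal.mod_lt _ hμ0', ?_⟩
    rw [← hk, Ordinal.div_add_mod, Ordinal.div_add_mod]
  have hFn : ∀ a, Order.IsNormal (F a) := by
    intro a
    exact (hn _).comp ((hIterNorm _).comp (hn _))
  have hF1 : F 1 = eFun := by
    funext x
    have h1small : (1 : Ordinal.{u}) < μ := by
      refine lt_of_lt_of_le Ordinal.one_lt_omega0 ?_
      rw [hμ]
      calc ω = ω ^ (1 : Ordinal.{u}) := (opow_one _).symm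
      _ ≤ ω ^ m := Ordinal.opow_le_opow_right Ordinal.omega0_pos (Ordinal.one_le_iff_ne_zero.2 hm0)
    have h := hrep 0 0 1 h1small x
    simp only [mul_zero, Nat.cast_zero, zero_add, Function.iterate_zero, id_eq] at h
    rw [h, E0 hE]
    exact congrFun h1 x
  have hFa : ∀ a b, F (a + b) = F a ∘ F b := by
    intro a b
    obtain ⟨q, k, r, hr, rfl⟩ := hdec a
    obtain ⟨q', k', r', hr', rfl⟩ := hdec b
    funext x
    rw [Function.comp_apply]
    rcases eq_or_ne q' 0 with rfl | hq'
    · rcases Nat.eq_zero_or_pos k' with rfl | hk'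
      · have hrr' : r + r' < μ := by
          rw [hμ] at hr hr' ⊢
          exact Ordinal.principal_add_omega0_opow m hr hr'
        have hsum : (ν * q + (μ * k + r)) + (ν * 0 + (μ * (0 : ℕ) + r'))
            = ν * q + (μ * k + (r + r')) := by
          rw [mul_zero, Nat.cast_zero, mul_zero, zero_add, zero_add, add_assoc, add_assoc]
        rw [hsum, hrep q k (r + r') hrr' x, hrep 0 0 r' hr' x, hrep q k r hr]
        simp only [mul_zero, Function.iterate_zero, id_eq]
        rw [E0 hE, ← Eadd hE]
      · have hμn' : μ ≤ μ * (k' : Ordinal.{u}) := by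
          calc μ = μ * 1 := (mul_one μ).symm
          _ ≤ μ * (k' : Ordinal.{u}) := by
            refine mul_le_mul_right ?_ μ
            exact_mod_cast Nat.one_le_iff_ne_zero.2 hk'.ne'
        have habs' : r + μ * (k' : Ordinal.{u}) = μ * k' := habsμ hr hμn'
        have hsum : (ν * q + (μ * k + r)) + (ν * 0 + (μ * k' + r'))
            = ν * q + (μ * ((k + k' : ℕ) : Ordinal.{u}) + r') := by
          rw [mul_zero, zero_add, add_assoc, add_assoc, ← add_assoc r, habs',
            ← add_assoc (μ * (k : Ordinal.{u})), ← mul_add, ← Nat.cast_add]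
        rw [hsum, hrep q (k + k') r' hr' x, hrep 0 k' r' hr' x, hrep q k r hr]
        rw [mul_zero, E0 hE, hErIter r hr k' hk'.ne' (E r' x),
          ← Function.iterate_add_apply]
    · have hνq' : ν ≤ ν * q' := by
        calc ν = ν * 1 := (mul_one ν).symm
        _ ≤ ν * q' := mul_le_mul_right (Ordinal.one_le_iff_ne_zero.2 hq') ν
      have hsum : (ν * q + (μ * k + r)) + (ν * q' + (μ * k' + r'))
          = ν * (q + q') + (μ * k' + r') := by
        rw [add_assoc, ← add_assoc (μ * (k : Ordinal.{u}) + r),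
          habs (hsmall k r hr) hνq', ← add_assoc, ← mul_add]
      rw [hsum, hrep (q + q') k' r' hr' x, hrep q' k' r' hr' x, hrep q k r hr]
      have h1' : E r (E (ν * q') (Fm^[k'] (E r' x))) = E (ν * q') (Fm^[k'] (E r' x)) := by
        rw [← Eadd hE, habs (lt_trans hr hμν) hνq']
      have h2' : Fm^[k] (E (ν * q') (Fm^[k'] (E r' x))) = E (ν * q') (Fm^[k'] (E r' x)) :=
        Function.iterate_fixed (hkey (ν * q') hνq' _) k
      rw [h1', h2', ← Eadd hE, ← mul_add]
  have hmin := hE.2.2.2 F hFn hF1 hFa μ (γ + 1)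
  have hFμ : F μ (γ + 1) = ξ := by
    have h := hrep 0 1 0 μpos (γ + 1)
    simp only [mul_zero, Nat.cast_one, mul_one, zero_add, add_zero] at h
    rw [h, Function.iterate_one, E0 hE, E0 hE, hFm2]
  rw [hFμ] at hmin
  exact absurd hmin (not_le.2 hgap2)

theorem exists_rep (hE : IsHyperexpFamily E) :
    ∀ ξ : Ordinal.{u}, ξ ≠ 0 → ∃ a b : Ordinal.{u}, Adm b ∧ ξ = E a b := by
  have hn := hE.1
  have h1 := hE.2.1
  intro ξ0
  induction ξ0 using Ordinal.induction with
  | h ξ IH =>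
    intro hξ
    by_cases hadm : Adm ξ
    · exact ⟨0, ξ, hadm, (E0 hE ξ).symm⟩
    · have hprin : ∀ u < ξ, ∀ v < ξ, u + v < ξ := by
        intro u hu v hv
        by_contra hle
        push_neg at hle
        refine hadm (Or.inr ⟨u, hu, ξ - u, ?_, (Ordinal.add_sub_cancel_of_le hu.le).symm⟩)
        exact lt_of_le_of_lt (Ordinal.sub_le.2 hle) hv
      have hP : Ordinal.Principal (· + ·) ξ := fun u v hu hv => hprin u hu v hv
      rcases Ordinal.principal_add_iff_zero_or_omega0_opow.1 hP with rfl | ⟨l, hl⟩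
      · exact absurd rfl hξ
      · have hlξ : ω ^ l = ξ := hl
        have hl0 : l ≠ 0 := by
          rintro rfl
          rw [opow_zero] at hlξ
          exact hadm (Or.inl hlξ.symm)
        have hlle : l ≤ ξ := by
          rw [← hlξ]
          exact Ordinal.right_le_opow l Ordinal.one_lt_omega0
        rcases lt_or_eq_of_le hlle with hlt | heq
        · obtain ⟨a, b, hb, hab⟩ := IH l hlt hl0
          refine ⟨1 + a, b, hb, ?_⟩
          rw [Eadd hE, ← hab, congrFun h1 l, eFun_of_ne_zero hl0, hlξ]
        · -- the fixed-point case ξ = ω ^ ξ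
          have hfixξ : ω ^ ξ = ξ := by rw [heq] at hlξ; exact hlξ
          by_contra hbad
          push_neg at hbad
          have hω : ω ≤ ξ := by
            calc ω = ω ^ (1 : Ordinal.{u}) := (opow_one _).symm
            _ ≤ ω ^ ξ := Ordinal.opow_le_opow_right Ordinal.omega0_pos
                (Ordinal.one_le_iff_ne_zero.2 hξ)
            _ = ξ := hfixξ
          have hξ1 : (1 : Ordinal.{u}) < ξ := lt_of_lt_of_le Ordinal.one_lt_omega0 hω
          have hξlim : Order.IsSuccLimit ξ := by
            refine Ordinal.isSuccLimit_iff.2 ⟨hξ, Order.isSuccPrelimit_of_succ_lt fun a haξ => ?_⟩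
            rw [← Ordinal.add_one_eq_succ]
            exact hprin a haξ 1 hξ1
          have key1 : ∀ a b : Ordinal.{u}, b ≠ 0 → b < ξ → E a b ≠ ξ := by
            intro a b hb0 hbξ heq'
            obtain ⟨a', b', hb', hab'⟩ := IH b hbξ hb0
            refine hbad (a + a') b' hb' ?_
            rw [Eadd hE, ← hab', heq']
          -- the first level with a value ≥ ξ at some point < ξ
          set S : Set Ordinal.{u} := {a | ∃ x, x < ξ ∧ ξ ≤ E a x} with hS
          have hSne : S.Nonempty := ⟨ξ, 1, hξ1, self_le_E_one hE ξ⟩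
          set μ := sInf S with hμdef
          have hμS : μ ∈ S := csInf_mem hSne
          have hnotS : ∀ a, a < μ → ∀ x, x < ξ → E a x < ξ := by
            intro a haμ x hx
            by_contra hcon
            push_neg at hcon
            exact absurd (csInf_le' (show a ∈ S from ⟨x, hx, hcon⟩)) (not_le.2 haμ)
          have hprinμ : ∀ u < μ, ∀ v < μ, u + v < μ := by
            intro u hu v hv
            by_contra hcon
            push_neg at hcon
            obtain ⟨x, hx, hxE⟩ := hμS
            have h2 : ξ ≤ E (u + v) x := le_trans hxE (Emono_index hE hcon x)
            rw [Eadd hE] at h2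
            exact absurd h2 (not_le.2 (hnotS u hu _ (hnotS v hv x hx)))
          have hμ0 : μ ≠ 0 := by
            intro h00
            obtain ⟨x, hx, hxE⟩ := hμS
            rw [h00, E0 hE] at hxE
            exact absurd hxE (not_le.2 hx)
          have hμ1 : μ ≠ 1 := by
            intro h01
            obtain ⟨x, hx, hxE⟩ := hμS
            rw [h01, congrFun h1 x] at hxE
            have h3 : eFun x < ξ := by
              have h4 : eFun x ≤ ω ^ x := Ordinal.sub_le_self (ω ^ x) 1
              have h5 : ω ^ x < ω ^ ξ :=
                (Ordinal.opow_lt_opow_iff_right Ordinal.one_lt_omega0).2 hx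
              rw [hfixξ] at h5
              exact lt_of_le_of_lt h4 h5
            exact absurd hxE (not_le.2 h3)
          have hPμ : Ordinal.Principal (· + ·) μ := fun u v hu hv => hprinμ u hu v hv
          rcases Ordinal.principal_add_iff_zero_or_omega0_opow.1 hPμ with h0 | ⟨mm, hmm⟩
          · exact absurd h0 hμ0
          · have hmm2 : μ = ω ^ mm := (show ω ^ mm = μ from hmm).symm
            have hm0 : mm ≠ 0 := by
              rintro rfl
              rw [opow_zero] at hmm2
              exact absurd hmm2 hμ1
            have hfixr : ∀ r, r < μ → E r ξ = ξ := by
              intro r hr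
              refine le_antisymm ?_ (self_le_E hE r ξ)
              exact ((hn r).le_iff_forall_le hξlim).2 fun b hb => (hnotS r hr b hb).le
            -- least point where `E μ` reaches ξ
            set T : Set Ordinal.{u} := {x | ξ ≤ E μ x} with hT
            have hTne : T.Nonempty := ⟨ξ, self_le_E hE μ ξ⟩
            set β := sInf T with hβdef
            have hβ1 : ξ ≤ E μ β := csInf_mem hTne
            have hβ2 : ∀ x, x < β → E μ x < ξ := by
              intro x hx
              by_contra hcon
              push_neg at hcon
              exact absurd (csInf_le' (show x ∈ T from hcon)) (not_le.2 hx)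
            have hβξ : β < ξ := by
              obtain ⟨x₀, hx₀ξ, hx₀⟩ := hμS
              exact lt_of_le_of_lt (csInf_le' (show x₀ ∈ T from hx₀)) hx₀ξ
            have hβ0 : β ≠ 0 := by
              rintro h0
              rw [h0, Ezero hE] at hβ1
              exact hξ (nonpos_iff_eq_zero.1 hβ1)
            have hgapβ : ξ < E μ β :=
              lt_of_le_of_ne hβ1 (Ne.symm (key1 μ β hβ0 hβξ))
            rcases Ordinal.zero_or_succ_or_isSuccLimit β with h0 | ⟨γ, hγ⟩ | hlim
            · exact absurd h0 hβ0
            · have hgap1 : E μ γ < ξ := hβ2 γ (by rw [← hγ]; exact Order.lt_succ γ)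
              have hgap2 : ξ < E μ (γ + 1) := by
                rw [Ordinal.add_one_eq_succ, hγ]
                exact hgapβ
              exact no_gap hE μ mm ξ γ hmm2 hm0 hfixr hgap1 hgap2
            · have : E μ β ≤ ξ := ((hn μ).le_iff_forall_le hlim).2 fun x hx => (hβ2 x hx).le
              exact absurd this (not_le.2 hgapβ)

end HNFAux


/-- (Hyperexponential normal form.) For every ordinal `ξ > 0` there are
unique `α, β` with `β` equal to `1` or additively decomposable, and `ξ = e^α(β)`. -/
theorem hyperexp_normal_form
    (E : Ordinal.{u} → Ordinal.{u} → Ordinal.{u}) (hE : IsHyperexpFamily E)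
    (ξ : Ordinal.{u}) (hξ : ξ ≠ 0) :
    ∃! p : Ordinal.{u} × Ordinal.{u},
      (p.2 = 1 ∨ ∃ γ < p.2, ∃ δ < p.2, p.2 = γ + δ) ∧ ξ = E p.1 p.2 := by
  obtain ⟨a, b, hb, hab⟩ := HNFAux.exists_rep hE ξ hξ
  refine ⟨(a, b), ⟨hb, hab⟩, ?_⟩
  rintro ⟨a', b'⟩ ⟨hb', hab'⟩
  have he : E a' b' = E a b := by rw [← hab, ← hab']
  rcases le_total a' a with h | h
  · obtain ⟨h1', h2'⟩ := HNFAux.unique_aux hE h hb' hb he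
    exact Prod.ext h1' h2'
  · obtain ⟨h1', h2'⟩ := HNFAux.unique_aux hE h hb hb' he.symm
    exact Prod.ext h1'.symm h2'.symm


end
end
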